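/- In the Brandt semigroup B_n, for nonzero b = (b¹,b²), d = (d¹,d²): the equation x² = b·x·d has exactly n² − n + 2 solutions if b² = d¹ and b¹ = d² = b²; exactly n² − n + 1 solutions if b² = d¹ but not (b¹ = d² = b²); and exactly n² − n solutions if b² ≠ d¹. -/

import Mathlib

abbrev Brandt (n : ℕ) : Type := Option (Fin n × Fin n)

def bmul {n : ℕ} : Brandt n → Brandt n → Brandt n
  | some (e, k), some (l, m) => if k = l then some (e, m) else none
  | _, _ => none

open Finset

lemma card_offdiag (n : ℕ) :
    ((univ : Finset (Fin n × Fin n)).filter fun p => p.1 ≠ p.2).card = n ^ 2 - n := by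
  have h1 : ((univ : Finset (Fin n × Fin n)).filter fun p => p.1 = p.2).card = n := by
    have : ((univ : Finset (Fin n × Fin n)).filter fun p => p.1 = p.2)
        = (univ : Finset (Fin n)).image (fun i => (i, i)) := by
      ext ⟨a, c⟩
      simp only [mem_filter, mem_univ, true_and, mem_image]
      constructor
      · rintro h; exact ⟨a, by simp [h]⟩
      · rintro ⟨i, hi⟩; cases hi; rfl
    rw [this, card_image_of_injective _ (fun x y h => by simpa using h)]
    simp
  simp only [ne_eq]
  rw [Finset.filter_not, card_sdiff_of_subset (filter_subset _ _), h1, card_univ]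
  simp [sq]

lemma brandt_key (n : ℕ) (b1 b2 d1 d2 i j : Fin n) :
    (bmul (some (i,j)) (some (i,j)) = bmul (some (b1,b2)) (bmul (some (i,j)) (some (d1,d2)))) ↔
    ((i ≠ j ∧ ¬(j = d1 ∧ b2 = i)) ∨ (i = j ∧ j = d1 ∧ b2 = i ∧ b1 = i ∧ d2 = j)) := by
  simp only [bmul]
  rcases eq_or_ne j i with hji | hji <;>
    rcases eq_or_ne j d1 with hjd | hjd <;>
      rcases eq_or_ne b2 i with hbi | hbi <;>
        simp_all <;> tauto

lemma brandt_set1 (n : ℕ) (b1 b2 d1 d2 : Fin n) (h1 : b2 = d1) (h2 : b1 = d2) (h3 : d2 = b2) :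
    ((univ : Finset (Brandt n)).filter
        fun x => bmul x x = bmul (some (b1,b2)) (bmul x (some (d1,d2))))
      = insert (some (d1, d1))
        (insert none (((univ : Finset (Fin n × Fin n)).filter fun p => p.1 ≠ p.2).image some)) := by
  ext x
  rcases x with _ | ⟨i, j⟩
  · simp only [mem_filter, mem_univ, true_and]; simp [bmul]
  · simp only [mem_filter, mem_univ, true_and, brandt_key, mem_insert, Option.some.injEq,
      mem_image, Prod.mk.injEq, mem_filter, ne_eq, exists_eq_right, reduceCtorEq, false_or]
    by_cases hij : i = j <;> by_cases hjd : j = d1 <;> by_cases hbi : b2 = i <;>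
      simp_all <;> tauto

lemma brandt_set2 (n : ℕ) (b1 b2 d1 d2 : Fin n) (h1 : b2 = d1) (h2 : ¬ (b1 = d2 ∧ d2 = b2)) :
    ((univ : Finset (Brandt n)).filter
        fun x => bmul x x = bmul (some (b1,b2)) (bmul x (some (d1,d2))))
      = insert none (((univ : Finset (Fin n × Fin n)).filter fun p => p.1 ≠ p.2).image some) := by
  ext x
  rcases x with _ | ⟨i, j⟩
  · simp only [mem_filter, mem_univ, true_and]; simp [bmul]
  · simp only [mem_filter, mem_univ, true_and, brandt_key, mem_insert, Option.some.injEq,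
      mem_image, Prod.mk.injEq, mem_filter, ne_eq, exists_eq_right, reduceCtorEq, false_or]
    by_cases hij : i = j <;> by_cases hjd : j = d1 <;> by_cases hbi : b2 = i <;>
      simp_all <;> try tauto
    all_goals (intro h hd; exact h2 (h.trans hd.symm) hd)

lemma brandt_set3 (n : ℕ) (b1 b2 d1 d2 : Fin n) (h1 : b2 ≠ d1) :
    ((univ : Finset (Brandt n)).filter
        fun x => bmul x x = bmul (some (b1,b2)) (bmul x (some (d1,d2))))
      = insert none
        ((((univ : Finset (Fin n × Fin n)).filter fun p => p.1 ≠ p.2).erase (b2, d1)).image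
          some) := by
  ext x
  rcases x with _ | ⟨i, j⟩
  · simp only [mem_filter, mem_univ, true_and]; simp [bmul]
  · simp only [mem_filter, mem_univ, true_and, brandt_key, mem_insert, Option.some.injEq,
      mem_image, Prod.mk.injEq, mem_filter, mem_erase, ne_eq, exists_eq_right,
      reduceCtorEq, false_or]
    by_cases hij : i = j <;> by_cases hjd : j = d1 <;> by_cases hbi : b2 = i <;>
      simp_all <;> tauto

theorem brandt_eq_sq_sandwich (n : ℕ) (b d : Fin n × Fin n) :
    (b.2 = d.1 ∧ (b.1 = d.2 ∧ d.2 = b.2) →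
      Nat.card {x : Brandt n // bmul x x = bmul (some b) (bmul x (some d))} =
        n ^ 2 + 2 - n) ∧
    (b.2 = d.1 ∧ ¬ (b.1 = d.2 ∧ d.2 = b.2) →
      Nat.card {x : Brandt n // bmul x x = bmul (some b) (bmul x (some d))} =
        n ^ 2 + 1 - n) ∧
    (b.2 ≠ d.1 →
      Nat.card {x : Brandt n // bmul x x = bmul (some b) (bmul x (some d))} =
        n ^ 2 - n) := by
  obtain ⟨b1, b2⟩ := b
  obtain ⟨d1, d2⟩ := d
  simp only [Prod.fst, Prod.snd]
  have hn : 0 < n := b1.pos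
  have hle : n ≤ n ^ 2 := by nlinarith
  have hcard : Nat.card {x : Brandt n //
        bmul x x = bmul (some (b1,b2)) (bmul x (some (d1,d2)))}
      = ((univ : Finset (Brandt n)).filter
          fun x => bmul x x = bmul (some (b1,b2)) (bmul x (some (d1,d2)))).card := by
    rw [Nat.card_eq_fintype_card, Fintype.card_subtype]
  refine ⟨?_, ?_, ?_⟩
  · rintro ⟨h1, h2, h3⟩
    rw [hcard, brandt_set1 n b1 b2 d1 d2 h1 h2 h3]
    rw [card_insert_of_notMem (by simp), card_insert_of_notMem (by simp),
      card_image_of_injective _ (Option.some_injective _), card_offdiag]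
    omega
  · rintro ⟨h1, h2⟩
    rw [hcard, brandt_set2 n b1 b2 d1 d2 h1 h2]
    rw [card_insert_of_notMem (by simp),
      card_image_of_injective _ (Option.some_injective _), card_offdiag]
    omega
  · intro h1
    have hmem : (b2, d1) ∈ ((univ : Finset (Fin n × Fin n)).filter fun p => p.1 ≠ p.2) := by
      simp [h1]
    rw [hcard, brandt_set3 n b1 b2 d1 d2 h1]
    rw [card_insert_of_notMem (by simp),
      card_image_of_injective _ (Option.some_injective _), card_erase_of_mem hmem, card_offdiag]
    have : 1 ≤ n ^ 2 - n := by
      have := Finset.card_pos.mpr ⟨_, hmem⟩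
      rw [card_offdiag] at this
      omega
    omega
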